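/- With the symmetric form S = [[0,I_n],[I_n,0]] on K^{2n} and x_1, x_2 as defined above (char K = 0, √x ≠ 0 ≠ y): every subspace V ⊆ K^{2n} that is invariant under both x_1 and x_2 and totally isotropic for S is zero. -/

import Mathlib

open Matrix

noncomputable section

/-- The standard hyperbolic symmetric form matrix `S = [[0, I_n],[I_n, 0]]`. -/
def Smat (K : Type*) [Field K] (n : ℕ) : Matrix (Fin n ⊕ Fin n) (Fin n ⊕ Fin n) K :=
  fromBlocks 0 1 1 0

/-- The symmetric form `B(v, w) = vᵀ S w` on `K^{2n}`. -/
def symForm (K : Type*) [Field K] (n : ℕ) (v w : Fin n ⊕ Fin n → K) : K :=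
  v ⬝ᵥ (Smat K n).mulVec w

/-- `D = diag(1, 2, …, n)`. -/
def Dmat' (K : Type*) [Field K] (n : ℕ) : Matrix (Fin n) (Fin n) K :=
  diagonal fun i => ((i : ℕ) + 1 : K)

/-- The matrix `A` with `a_{ij} = 1` if `i = 1` or `j = 1`, and `0` otherwise. -/
def Aso (K : Type*) [Field K] (n : ℕ) : Matrix (Fin n) (Fin n) K :=
  Matrix.of fun i j => if (i : ℕ) = 0 ∨ (j : ℕ) = 0 then (1 : K) else 0

/-- The matrix `Z` with `z_{1j} = 1` for `j ≠ 1`, `z_{i1} = -1` for `i ≠ 1`,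
and `0` otherwise. -/
def Zso (K : Type*) [Field K] (n : ℕ) : Matrix (Fin n) (Fin n) K :=
  Matrix.of fun i j =>
    if (i : ℕ) = 0 ∧ (j : ℕ) ≠ 0 then (1 : K) else if (j : ℕ) = 0 ∧ (i : ℕ) ≠ 0 then -1 else 0

/-- `x₁ = [[√x·D, 0], [0, -√x·D]]`. -/
def xOne (K : Type*) [Field K] (n : ℕ) (s : K) :
    Matrix (Fin n ⊕ Fin n) (Fin n ⊕ Fin n) K :=
  fromBlocks (s • Dmat' K n) 0 0 (-(s • Dmat' K n))

/-- `x₂ = [[√x·A, y·Z], [y²·Z, -√x·A]]`. -/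
def xTwo (K : Type*) [Field K] (n : ℕ) (s y : K) :
    Matrix (Fin n ⊕ Fin n) (Fin n ⊕ Fin n) K :=
  fromBlocks (s • Aso K n) (y • Zso K n) ((y ^ 2) • Zso K n) (-(s • Aso K n))

-- auxiliary lemmas

lemma symForm_eq {K : Type*} [Field K] {n : ℕ} (v w : Fin n ⊕ Fin n → K) :
    symForm K n v w =
      (∑ i, v (Sum.inl i) * w (Sum.inr i)) + ∑ i, v (Sum.inr i) * w (Sum.inl i) := by
  have hw : w = Sum.elim (w ∘ Sum.inl) (w ∘ Sum.inr) := by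
    funext k; cases k <;> rfl
  rw [symForm, Smat, hw, fromBlocks_mulVec]
  simp [dotProduct, Fintype.sum_sum_type]

lemma AZsum {K : Type*} [Field K] {n : ℕ} (hn : 2 ≤ n) (j : Fin n) :
    ∑ i, Aso K n i j * Zso K n i j = if (j : ℕ) = 0 then (1 - n : K) else 1 := by
  have hz : (0 : ℕ) < n := by omega
  have hiz : ∀ i : Fin n, (i : ℕ) = 0 ↔ i = ⟨0, hz⟩ := by
    intro i; constructor
    · intro h; exact Fin.ext h
    · intro h; rw [h]
  by_cases hj : (j : ℕ) = 0
  · rw [if_pos hj]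
    have h1 : ∀ i : Fin n, Aso K n i j * Zso K n i j =
        (if i = (⟨0, hz⟩ : Fin n) then (1 : K) else 0) - 1 := by
      intro i
      by_cases hi : (i : ℕ) = 0
      · simp [Aso, Zso, hi, hj, (hiz i).mp hi]
      · have hne : ¬ i = (⟨0, hz⟩ : Fin n) := fun h => hi ((hiz i).mpr h)
        simp [Aso, Zso, hi, hj, hne]
    rw [Finset.sum_congr rfl fun i _ => h1 i, Finset.sum_sub_distrib]
    simp [Finset.sum_ite_eq', Finset.card_univ]
  · rw [if_neg hj]
    have h1 : ∀ i : Fin n, Aso K n i j * Zso K n i j =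
        if i = (⟨0, hz⟩ : Fin n) then (1 : K) else 0 := by
      intro i
      by_cases hi : (i : ℕ) = 0
      · simp [Aso, Zso, hi, hj, (hiz i).mp hi]
      · have hne : ¬ i = (⟨0, hz⟩ : Fin n) := fun h => hi ((hiz i).mpr h)
        simp [Aso, Zso, hi, hj, hne]
    rw [Finset.sum_congr rfl fun i _ => h1 i]
    simp [Finset.sum_ite_eq']

lemma xOne_diag {K : Type*} [Field K] {n : ℕ} (s : K) :
    xOne K n s = diagonal (Sum.elim (fun i : Fin n => s * ((i : ℕ) + 1))
      (fun i : Fin n => -(s * ((i : ℕ) + 1)))) := by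
  ext k l
  rcases k with i | i <;> rcases l with l | l <;>
    simp [xOne, Dmat', Matrix.diagonal_apply, mul_ite, mul_zero] <;> split_ifs <;> ring


lemma mu_inj {K : Type*} [Field K] [CharZero K] {n : ℕ} {s : K} (hs : s ≠ 0) :
    Function.Injective (Sum.elim (fun i : Fin n => s * ((i : ℕ) + 1))
      (fun i : Fin n => -(s * ((i : ℕ) + 1)))) := by
  have cast0 : ∀ i l : Fin n, s * (((i : ℕ) : K) + 1) = -(s * (((l : ℕ) : K) + 1)) → False := by
    intro i l h
    have h2 : s * ((((i : ℕ) + 1 + ((l : ℕ) + 1) : ℕ)) : K) = 0 := by push_cast; rw [mul_add, h]; ring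
    rcases mul_eq_zero.mp h2 with h | h
    · exact hs h
    · have := Nat.cast_eq_zero.mp h; omega
  intro k l h
  rcases k with i | i <;> rcases l with l | l <;> simp only [Sum.elim_inl, Sum.elim_inr] at h
  · have h1 := mul_left_cancel₀ hs h
    have h2 : ((i : ℕ) + 1 : ℕ) = ((l : ℕ) + 1 : ℕ) := by exact_mod_cast h1
    exact congrArg Sum.inl (Fin.ext (by omega))
  · exact absurd h (fun h => cast0 i l h)
  · exact absurd h.symm (fun h => cast0 l i h)
  · have h1 := mul_left_cancel₀ hs (neg_injective h)
    have h2 : ((i : ℕ) + 1 : ℕ) = ((l : ℕ) + 1 : ℕ) := by exact_mod_cast h1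
    exact congrArg Sum.inr (Fin.ext (by omega))

/-- every subspace of `K^{2n}` invariant under `x₁` and `x₂` and
totally isotropic for the symmetric form `S` is zero. -/
theorem stmt12 (K : Type*) [Field K] [CharZero K] (n : ℕ) (hn : 2 ≤ n)
    (s y : K) (hs : s ≠ 0) (hy : y ≠ 0)
    (V : Submodule K (Fin n ⊕ Fin n → K))
    (h1 : ∀ v ∈ V, (xOne K n s).mulVec v ∈ V)
    (h2 : ∀ v ∈ V, (xTwo K n s y).mulVec v ∈ V)
    (hiso : ∀ v ∈ V, ∀ w ∈ V, symForm K n v w = 0) :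
    V = ⊥ := by
  classical
  set μ : Fin n ⊕ Fin n → K := Sum.elim (fun i : Fin n => s * ((i : ℕ) + 1))
      (fun i : Fin n => -(s * ((i : ℕ) + 1))) with hμ
  have hx1 : ∀ (v : Fin n ⊕ Fin n → K) (k), (xOne K n s).mulVec v k = μ k * v k := by
    intro v k
    rw [xOne_diag]
    exact Matrix.mulVec_diagonal _ _ _
  -- step 1: some standard basis vector lies in V if V is nonzero
  have key : ∀ m : ℕ, ∀ v, v ∈ V → v ≠ 0 →
      (Finset.univ.filter fun k => v k ≠ 0).card ≤ m → ∃ k, Pi.single k (1 : K) ∈ V := by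
    intro m
    induction m with
    | zero =>
      intro v hv hv0 hc
      exfalso
      apply hv0
      funext k
      simp only [Pi.zero_apply]
      by_contra hk
      have hmem : k ∈ Finset.univ.filter fun k => v k ≠ 0 := by simp [hk]
      rw [Finset.card_eq_zero.mp (Nat.le_zero.mp hc)] at hmem
      exact absurd hmem (Finset.notMem_empty k)
    | succ m ih =>
      intro v hv hv0 hc
      obtain ⟨a, ha⟩ : ∃ k, v k ≠ 0 := Function.ne_iff.mp hv0
      by_cases hone : ∀ k, v k ≠ 0 → k = a
      · refine ⟨a, ?_⟩
        have hv' : (v a)⁻¹ • v = Pi.single a (1 : K) := by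
          funext k
          by_cases hk : k = a
          · subst hk; simp [Pi.single_apply, inv_mul_cancel₀ ha]
          · have hvk : v k = 0 := by by_contra h; exact hk (hone k h)
            simp [Pi.single_apply, hk, hvk]
        rw [← hv']
        exact V.smul_mem _ hv
      · push_neg at hone
        obtain ⟨b, hb, hba⟩ := hone
        set w : Fin n ⊕ Fin n → K := (xOne K n s).mulVec v - μ a • v with hwdef
        have hwV : w ∈ V := V.sub_mem (h1 v hv) (V.smul_mem _ hv)
        have hwk : ∀ k, w k = (μ k - μ a) * v k := by
          intro k
          simp [hwdef, hx1, sub_mul]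
        have hwb : w b ≠ 0 := by
          rw [hwk]
          exact mul_ne_zero (sub_ne_zero.mpr fun h => hba (mu_inj hs h)) hb
        have hw0 : w ≠ 0 := fun h => hwb (by rw [h]; rfl)
        have haT : a ∈ Finset.univ.filter fun k => v k ≠ 0 := by simp [ha]
        have hsub : (Finset.univ.filter fun k => w k ≠ 0) ⊆
            (Finset.univ.filter fun k => v k ≠ 0).erase a := by
          intro k hk
          simp only [Finset.mem_filter, Finset.mem_univ, true_and] at hk
          rw [Finset.mem_erase]
          constructor
          · rintro rfl
            exact hk (by rw [hwk]; ring)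
          · simp only [Finset.mem_filter, Finset.mem_univ, true_and]
            intro hvk
            exact hk (by rw [hwk, hvk, mul_zero])
        refine ih w hwV hw0 ?_
        have := Finset.card_le_card hsub
        rw [Finset.card_erase_of_mem haT] at this
        omega
  -- step 2: derive the contradiction from isotropy
  rw [Submodule.eq_bot_iff]
  intro v hv
  by_contra hv0
  obtain ⟨k, hk⟩ := key _ v hv hv0 le_rfl
  have huV := h2 _ hk
  have h0 := hiso _ huV _ huV
  rw [symForm_eq] at h0
  have hn1 : (1 : K) - n ≠ 0 := by
    intro h
    have h1 : ((n : ℕ) : K) = ((1 : ℕ) : K) := by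
      rw [Nat.cast_one]; exact (sub_eq_zero.mp h).symm
    have h2 : n = 1 := Nat.cast_injective h1
    omega
  rcases k with j | j
  · have hl : ∀ i, (xTwo K n s y).mulVec (Pi.single (Sum.inl j) (1 : K)) (Sum.inl i)
        = s * Aso K n i j := by
      intro i; simp [xTwo, Matrix.mulVec_single]
    have hr : ∀ i, (xTwo K n s y).mulVec (Pi.single (Sum.inl j) (1 : K)) (Sum.inr i)
        = y ^ 2 * Zso K n i j := by
      intro i; simp [xTwo, Matrix.mulVec_single]
    have hfac : (∑ i, (xTwo K n s y).mulVec (Pi.single (Sum.inl j) (1 : K)) (Sum.inl i) *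
          (xTwo K n s y).mulVec (Pi.single (Sum.inl j) (1 : K)) (Sum.inr i)) +
        ∑ i, (xTwo K n s y).mulVec (Pi.single (Sum.inl j) (1 : K)) (Sum.inr i) *
          (xTwo K n s y).mulVec (Pi.single (Sum.inl j) (1 : K)) (Sum.inl i) =
        (2 * s * y ^ 2) * ∑ i, Aso K n i j * Zso K n i j := by
      rw [Finset.mul_sum, ← Finset.sum_add_distrib]
      refine Finset.sum_congr rfl fun i _ => ?_
      rw [hl i, hr i]; ring
    rw [hfac, AZsum hn j] at h0
    have h2sy : 2 * s * y ^ 2 ≠ 0 :=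
      mul_ne_zero (mul_ne_zero two_ne_zero hs) (pow_ne_zero 2 hy)
    rcases mul_eq_zero.mp h0 with h | h
    · exact h2sy h
    · split_ifs at h
      · exact hn1 h
      · exact one_ne_zero h
  · have hl : ∀ i, (xTwo K n s y).mulVec (Pi.single (Sum.inr j) (1 : K)) (Sum.inl i)
        = y * Zso K n i j := by
      intro i; simp [xTwo, Matrix.mulVec_single]
    have hr : ∀ i, (xTwo K n s y).mulVec (Pi.single (Sum.inr j) (1 : K)) (Sum.inr i)
        = -(s * Aso K n i j) := by
      intro i; simp [xTwo, Matrix.mulVec_single]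
    have hfac : (∑ i, (xTwo K n s y).mulVec (Pi.single (Sum.inr j) (1 : K)) (Sum.inl i) *
          (xTwo K n s y).mulVec (Pi.single (Sum.inr j) (1 : K)) (Sum.inr i)) +
        ∑ i, (xTwo K n s y).mulVec (Pi.single (Sum.inr j) (1 : K)) (Sum.inr i) *
          (xTwo K n s y).mulVec (Pi.single (Sum.inr j) (1 : K)) (Sum.inl i) =
        (-(2 * s * y)) * ∑ i, Aso K n i j * Zso K n i j := by
      rw [Finset.mul_sum, ← Finset.sum_add_distrib]
      refine Finset.sum_congr rfl fun i _ => ?_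
      rw [hl i, hr i]; ring
    rw [hfac, AZsum hn j] at h0
    have h2sy : -(2 * s * y) ≠ 0 := by
      simp only [neg_ne_zero]
      exact mul_ne_zero (mul_ne_zero two_ne_zero hs) hy
    rcases mul_eq_zero.mp h0 with h | h
    · exact h2sy h
    · split_ifs at h
      · exact hn1 h
      · exact one_ne_zero h
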